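/- Let q be a prime power. In PG(5,q), let E be an elliptic quadric Q⁻(5,q) and H a non-tangent hyperplane, so E ∩ H is a parabolic quadric Q(4,q). The generalized quadrangle Q(5,q) of order (q, q²) has (q+1)(q³+1) points and (q²+1)(q³+1) lines; deleting the q³+q²+q+1 points and (q+1)(q²+1) lines of E ∩ H leaves a structure whose incidence graph is a (q, q²+1; 8)-bipartite biregular graph of order (q²+q+1)(q³−q). -/

import Mathlib

/-- A finite generalized quadrangle of order `(s,t)`. -/
structure GenQuad (P L : Type*) (s t : ℕ) where
  inc : P → L → Prop
  line_pts : ∀ ℓ : L, {p : P | inc p ℓ}.ncard = s + 1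
  pt_lines : ∀ p : P, {ℓ : L | inc p ℓ}.ncard = t + 1
  unique_line : ∀ ⦃p q : P⦄ ⦃ℓ ℓ' : L⦄, p ≠ q → inc p ℓ → inc q ℓ →
    inc p ℓ' → inc q ℓ' → ℓ = ℓ'
  gq : ∀ (p : P) (ℓ : L), ¬ inc p ℓ →
    ∃! q : P, inc q ℓ ∧ q ≠ p ∧ ∃ ℓ' : L, inc p ℓ' ∧ inc q ℓ'

/-- Two distinct points are collinear if some line is incident with both. -/
def GenQuad.coll {P L : Type*} {s t : ℕ} (G : GenQuad P L s t) (p q : P) : Prop :=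
  p ≠ q ∧ ∃ ℓ : L, G.inc p ℓ ∧ G.inc q ℓ

/-- The incidence graph of a point-line incidence relation `I`. -/
def incGraph {P L : Type*} (I : P → L → Prop) : SimpleGraph (P ⊕ L) where
  Adj x y :=
    match x, y with
    | Sum.inl p, Sum.inr l => I p l
    | Sum.inr l, Sum.inl p => I p l
    | _, _ => False
  symm := ⟨by rintro (p | l) (p' | l') h <;> exact h⟩
  loopless := ⟨by rintro (p | l) h <;> exact h⟩

lemma GenQuad.no_triangle {P L : Type*} {s t : ℕ} (G : GenQuad P L s t) {n : L} {a b c : P}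
    (hab : a ≠ b) (ha : G.inc a n) (hb : G.inc b n) (hc : ¬ G.inc c n)
    (hca : ∃ m, G.inc c m ∧ G.inc a m) (hcb : ∃ m, G.inc c m ∧ G.inc b m) : False := by
  obtain ⟨u, -, hu⟩ := G.gq c n hc
  have h1 : a = u := hu a ⟨ha, fun h => hc (h ▸ ha), hca⟩
  have h2 : b = u := hu b ⟨hb, fun h => hc (h ▸ hb), hcb⟩
  exact hab (h1.trans h2.symm)

lemma ncard_filter_univ {α : Type*} [Fintype α] (p : α → Prop) [DecidablePred p] :
    (Finset.univ.filter p).card = {x | p x}.ncard := by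
  rw [Set.ncard_eq_toFinset_card', Set.toFinset_setOf]
lemma incGraph_adj_ll {P L : Type*} {I : P → L → Prop} {p p' : P} :
    (incGraph I).Adj (Sum.inl p) (Sum.inl p') ↔ False := Iff.rfl
lemma incGraph_adj_rr {P L : Type*} {I : P → L → Prop} {l l' : L} :
    (incGraph I).Adj (Sum.inr l) (Sum.inr l') ↔ False := Iff.rfl
lemma incGraph_adj_lr {P L : Type*} {I : P → L → Prop} {p : P} {l : L} :
    (incGraph I).Adj (Sum.inl p) (Sum.inr l) ↔ I p l := Iff.rfl
lemma incGraph_adj_rl {P L : Type*} {I : P → L → Prop} {p : P} {l : L} :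
    (incGraph I).Adj (Sum.inr l) (Sum.inl p) ↔ I p l := Iff.rfl

lemma incGraph_walk_even {P L : Type*} {I : P → L → Prop} :
    ∀ {x y : P ⊕ L} (w : (incGraph I).Walk x y), Even w.length ↔ (x.isLeft = y.isLeft) := by
  intro x y w
  induction w with
  | nil => simp
  | @cons u v _ h w ih =>
    have huv : u.isLeft = !v.isLeft := by
      rcases u with p | l <;> rcases v with p' | l' <;> simp_all [incGraph]
    rw [SimpleGraph.Walk.length_cons, Nat.even_add_one, huv]
    rw [ih]
    cases hb : v.isLeft <;> cases hy : Sum.isLeft _ <;> simp_all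

lemma incGraph_no_four {P L : Type*} {I : P → L → Prop}
    (hU : ∀ ⦃p p' : P⦄ ⦃l l' : L⦄, p ≠ p' → I p l → I p' l → I p l' → I p' l' → l = l') :
    ∀ {v : P ⊕ L} (w : (incGraph I).Walk v v), w.IsCycle → w.length ≠ 4 := by
  intro v w hw hlen
  cases w with
  | nil => simp at hlen
  | cons h₁ w =>
  cases w with
  | nil => simp at hlen
  | cons h₂ w =>
  cases w with
  | nil => simp at hlen
  | cons h₃ w =>
  cases w with
  | nil => simp at hlen
  | cons h₄ w =>
  cases w with
  | cons h₅ w => simp [SimpleGraph.Walk.length_cons] at hlen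
  | nil =>
  have hnd := hw.support_nodup
  rename_i b c d
  -- h₁ : Adj v b, h₂ : Adj b c, h₃ : Adj c d, h₄ : Adj d v
  rcases v with p | l <;> rcases b with p' | l' <;> rcases c with p'' | l'' <;>
    rcases d with p''' | l''' <;>
    first
      | exact incGraph_adj_ll.mp h₁ | exact incGraph_adj_rr.mp h₁
      | exact incGraph_adj_ll.mp h₂ | exact incGraph_adj_rr.mp h₂
      | exact incGraph_adj_ll.mp h₃ | exact incGraph_adj_rr.mp h₃
      | exact incGraph_adj_ll.mp h₄ | exact incGraph_adj_rr.mp h₄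
      | skip
  · -- v = inl p, b = inr l', c = inl p'', d = inr l'''
    simp at hnd
    have e₁ : I p l' := h₁
    have e₂ : I p'' l' := h₂
    have e₃ : I p'' l''' := h₃
    have e₄ : I p l''' := h₄
    have hpp : p ≠ p'' := fun h => (by tauto : ¬ p'' = p) h.symm
    have hll : l' ≠ l''' := by tauto
    exact hll (hU hpp e₁ e₂ e₄ e₃)
  · -- v = inr l, b = inl p', c = inr l'', d = inl p'''
    simp at hnd
    have e₁ : I p' l := h₁
    have e₂ : I p' l'' := h₂
    have e₃ : I p''' l'' := h₃
    have e₄ : I p''' l := h₄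
    have hpp : p' ≠ p''' := by tauto
    have hll : l ≠ l'' := fun h => (by tauto : ¬ l'' = l) h.symm
    exact hll (hU hpp e₁ e₄ e₂ e₃)

lemma incGraph_no_six {P L : Type*} {I : P → L → Prop}
    (h6 : ∀ (p₁ p₂ p₃ : P) (n₁ n₂ n₃ : L), I p₁ n₁ → I p₂ n₁ → I p₂ n₂ → I p₃ n₂ →
      I p₃ n₃ → I p₁ n₃ → p₁ ≠ p₂ → p₂ ≠ p₃ → p₁ ≠ p₃ → n₁ ≠ n₂ → n₂ ≠ n₃ → n₁ ≠ n₃ → False) :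
    ∀ {v : P ⊕ L} (w : (incGraph I).Walk v v), w.IsCycle → w.length ≠ 6 := by
  intro v w hw hlen
  cases w with
  | nil => simp at hlen
  | cons h₁ w =>
  cases w with
  | nil => simp at hlen
  | cons h₂ w =>
  cases w with
  | nil => simp at hlen
  | cons h₃ w =>
  cases w with
  | nil => simp at hlen
  | cons h₄ w =>
  cases w with
  | nil => simp at hlen
  | cons h₅ w =>
  cases w with
  | nil => simp at hlen
  | cons h₆ w =>
  cases w with
  | cons h₇ w => simp [SimpleGraph.Walk.length_cons] at hlen
  | nil =>
  have hnd := hw.support_nodup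
  rename_i b c d e f
  rcases v with p | l <;> rcases b with p' | l' <;> rcases c with p'' | l'' <;>
    rcases d with p''' | l''' <;> rcases e with p4 | l4 <;> rcases f with p5 | l5 <;>
    first
      | exact incGraph_adj_ll.mp h₁ | exact incGraph_adj_rr.mp h₁
      | exact incGraph_adj_ll.mp h₂ | exact incGraph_adj_rr.mp h₂
      | exact incGraph_adj_ll.mp h₃ | exact incGraph_adj_rr.mp h₃
      | exact incGraph_adj_ll.mp h₄ | exact incGraph_adj_rr.mp h₄
      | exact incGraph_adj_ll.mp h₅ | exact incGraph_adj_rr.mp h₅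
      | exact incGraph_adj_ll.mp h₆ | exact incGraph_adj_rr.mp h₆
      | skip
  · -- v=inl p, b=inr l', c=inl p'', d=inr l''', e=inl p4, f=inr l5
    simp at hnd
    have e₁ : I p l' := h₁
    have e₂ : I p'' l' := h₂
    have e₃ : I p'' l''' := h₃
    have e₄ : I p4 l''' := h₄
    have e₅ : I p4 l5 := h₅
    have e₆ : I p l5 := h₆
    exact h6 p p'' p4 l' l''' l5 e₁ e₂ e₃ e₄ e₅ e₆
      (fun h => (by tauto : ¬ p'' = p) h.symm) (by tauto)
      (fun h => (by tauto : ¬ p4 = p) h.symm) (by tauto) (by tauto)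
      (fun h => (by tauto : ¬ l' = l5) h)
  · -- v=inr l, b=inl p', c=inr l'', d=inl p''', e=inr l4, f=inl p5
    simp at hnd
    have e₁ : I p' l := h₁
    have e₂ : I p' l'' := h₂
    have e₃ : I p''' l'' := h₃
    have e₄ : I p''' l4 := h₄
    have e₅ : I p5 l4 := h₅
    have e₆ : I p5 l := h₆
    exact h6 p' p''' p5 l'' l4 l e₂ e₃ e₄ e₅ e₆ e₁
      (by tauto) (by tauto) (by tauto) (by tauto)
      (fun h => (by tauto : ¬ l4 = l) h) (fun h => (by tauto : ¬ l'' = l) h)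

lemma incGraph_cycle8 {P L : Type*} {I : P → L → Prop}
    {a b c d : P} {m₁ m₂ m₃ m₄ : L}
    (i1 : I a m₁) (i2 : I c m₁) (i3 : I c m₂) (i4 : I b m₂)
    (i5 : I b m₃) (i6 : I d m₃) (i7 : I d m₄) (i8 : I a m₄)
    (hab : a ≠ b) (hac : a ≠ c) (had : a ≠ d) (hbc : b ≠ c) (hbd : b ≠ d) (hcd : c ≠ d)
    (h12 : m₁ ≠ m₂) (h13 : m₁ ≠ m₃) (h14 : m₁ ≠ m₄) (h23 : m₂ ≠ m₃) (h24 : m₂ ≠ m₄)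
    (h34 : m₃ ≠ m₄) :
    ∃ w : (incGraph I).Walk (Sum.inl a) (Sum.inl a), w.IsCycle ∧ w.length = 8 := by
  refine ⟨SimpleGraph.Walk.cons (incGraph_adj_lr.mpr i1)
    (SimpleGraph.Walk.cons (incGraph_adj_rl.mpr i2)
    (SimpleGraph.Walk.cons (incGraph_adj_lr.mpr i3)
    (SimpleGraph.Walk.cons (incGraph_adj_rl.mpr i4)
    (SimpleGraph.Walk.cons (incGraph_adj_lr.mpr i5)
    (SimpleGraph.Walk.cons (incGraph_adj_rl.mpr i6)
    (SimpleGraph.Walk.cons (incGraph_adj_lr.mpr i7)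
    (SimpleGraph.Walk.cons (incGraph_adj_rl.mpr i8) SimpleGraph.Walk.nil))))))), ?_, rfl⟩
  rw [SimpleGraph.Walk.isCycle_def]
  refine ⟨⟨?_⟩, by simp, ?_⟩
  · simp only [SimpleGraph.Walk.edges_cons, SimpleGraph.Walk.edges_nil, List.nodup_cons,
      List.mem_cons, List.not_mem_nil, or_false, List.nodup_nil, and_true, Sym2.eq,
      Sym2.rel_iff', Prod.mk.injEq, Prod.swap_prod_mk, Sum.inl.injEq, Sum.inr.injEq]
    refine ⟨?_, ?_, ?_, ?_, ?_, ?_, ?_⟩ <;> push_neg <;> tauto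
  · simp only [SimpleGraph.Walk.support_cons, SimpleGraph.Walk.support_nil, List.tail_cons,
      List.nodup_cons, List.mem_cons, List.not_mem_nil, or_false, List.nodup_nil, and_true,
      Sum.inl.injEq, Sum.inr.injEq]
    refine ⟨?_, ?_, ?_, ?_, ?_, ?_, ?_⟩ <;> push_neg <;> tauto

set_option maxHeartbeats 2000000 in
/-- The generalized quadrangle `Q(5,q)` of order `(q, q²)` has `(q+1)(q³+1)` points and
`(q²+1)(q³+1)` lines; deleting the `q³+q²+q+1` points and `(q+1)(q²+1)` lines of a parabolic
quadric hyperplane section `E ∩ H` (each deleted line having all its points deleted, each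
line meeting the section) leaves a structure whose incidence graph is a
`(q, q²+1; 8)`-bipartite biregular graph of order `(q²+q+1)(q³−q)`. -/
theorem stmt17 {P L : Type*} [Finite P] [Finite L] (q : ℕ) (hq : IsPrimePow q)
    (G : GenQuad P L q (q ^ 2))
    (hP : Nat.card P = (q + 1) * (q ^ 3 + 1)) (hL : Nat.card L = (q ^ 2 + 1) * (q ^ 3 + 1))
    (Pd : Set P) (Ld : Set L)
    (hPd : Pd.ncard = q ^ 3 + q ^ 2 + q + 1) (hLd : Ld.ncard = (q + 1) * (q ^ 2 + 1))
    (hsub : ∀ ℓ ∈ Ld, ∀ p : P, G.inc p ℓ → p ∈ Pd)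
    (hmeet : ∀ ℓ : L, ∃ p ∈ Pd, G.inc p ℓ) :
    (∀ ℓ : L, ℓ ∉ Ld → {p ∈ Pd | G.inc p ℓ}.ncard = 1) ∧
    (let Γ := incGraph (fun (p : {p : P // p ∉ Pd}) (ℓ : {ℓ : L // ℓ ∉ Ld}) => G.inc p.1 ℓ.1)
     Γ.girth = 8 ∧
     (∀ p : {p : P // p ∉ Pd}, (Γ.neighborSet (Sum.inl p)).ncard = q ^ 2 + 1) ∧
     (∀ ℓ : {ℓ : L // ℓ ∉ Ld}, (Γ.neighborSet (Sum.inr ℓ)).ncard = q) ∧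
     Nat.card ({p : P // p ∉ Pd} ⊕ {ℓ : L // ℓ ∉ Ld}) = (q ^ 2 + q + 1) * (q ^ 3 - q)) := by
  classical
  have hq2 : 2 ≤ q := hq.two_le
  have fP : Fintype P := Fintype.ofFinite P
  have fL : Fintype L := Fintype.ofFinite L
  -- KEY COUNTING: every non-deleted line meets Pd in exactly one point
  have key : ∀ ℓ : L, ℓ ∉ Ld → {p : P | p ∈ Pd ∧ G.inc p ℓ}.ncard = 1 := by
    have hPdF : (Finset.univ.filter fun p => p ∈ Pd).card = q ^ 3 + q ^ 2 + q + 1 := by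
      rw [ncard_filter_univ]; simpa using hPd
    have hLdF : (Finset.univ.filter fun ℓ => ℓ ∈ Ld).card = (q + 1) * (q ^ 2 + 1) := by
      rw [ncard_filter_univ]; simpa using hLd
    set c : L → ℕ := fun ℓ => (Finset.univ.filter fun p => p ∈ Pd ∧ G.inc p ℓ).card with hc
    have hsum : ∑ ℓ : L, c ℓ = (q ^ 3 + q ^ 2 + q + 1) * (q ^ 2 + 1) := by
      calc ∑ ℓ : L, c ℓ
          = ∑ ℓ : L, ∑ p : P, if p ∈ Pd ∧ G.inc p ℓ then 1 else 0 := by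
            exact Finset.sum_congr rfl fun ℓ _ => Finset.card_filter _ _
        _ = ∑ p : P, ∑ ℓ : L, if p ∈ Pd ∧ G.inc p ℓ then 1 else 0 := Finset.sum_comm
        _ = ∑ p : P, if p ∈ Pd then q ^ 2 + 1 else 0 := by
            refine Finset.sum_congr rfl fun p _ => ?_
            by_cases hp : p ∈ Pd
            · simp only [hp, true_and, if_true]
              rw [← Finset.card_filter, ncard_filter_univ]
              exact G.pt_lines p
            · simp [hp]
        _ = (q ^ 3 + q ^ 2 + q + 1) * (q ^ 2 + 1) := by
            rw [Finset.sum_ite, Finset.sum_const, Finset.sum_const, smul_eq_mul, smul_eq_mul,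
              mul_zero, add_zero, hPdF]
    have hsplit := Finset.sum_add_sum_compl (Finset.univ.filter fun ℓ => ℓ ∈ Ld) c
    have hLdsum : ∑ ℓ ∈ (Finset.univ.filter fun ℓ => ℓ ∈ Ld), c ℓ
        = ((q + 1) * (q ^ 2 + 1)) * (q + 1) := by
      rw [← hLdF]
      refine Finset.sum_const_nat fun ℓ hℓ => ?_
      have hmem : ℓ ∈ Ld := (Finset.mem_filter.mp hℓ).2
      have heq : (Finset.univ.filter fun p => p ∈ Pd ∧ G.inc p ℓ)
          = Finset.univ.filter fun p => G.inc p ℓ := by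
        refine Finset.filter_congr fun p _ => ?_
        exact ⟨fun h => h.2, fun h => ⟨hsub ℓ hmem p h, h⟩⟩
      show (Finset.univ.filter fun p => p ∈ Pd ∧ G.inc p ℓ).card = q + 1
      rw [heq, ncard_filter_univ]
      exact G.line_pts ℓ
    have hcompl : ((Finset.univ.filter fun ℓ => ℓ ∈ Ld)ᶜ).card
        = (q ^ 2 + 1) * (q ^ 3 + 1) - (q + 1) * (q ^ 2 + 1) := by
      rw [Finset.card_compl, hLdF, ← Nat.card_eq_fintype_card, hL]
    have hone : ∀ ℓ ∈ (Finset.univ.filter fun ℓ => ℓ ∈ Ld)ᶜ, c ℓ = 1 := by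
      have hSsum : ∑ ℓ ∈ (Finset.univ.filter fun ℓ => ℓ ∈ Ld)ᶜ, c ℓ
          = ((Finset.univ.filter fun ℓ => ℓ ∈ Ld)ᶜ).card := by
        rw [hcompl]
        have e1 : ((q + 1) * (q ^ 2 + 1)) * (q + 1)
            + ((q ^ 2 + 1) * (q ^ 3 + 1) - (q + 1) * (q ^ 2 + 1))
            = (q ^ 3 + q ^ 2 + q + 1) * (q ^ 2 + 1) := by
          have h3 : (q + 1) * (q ^ 2 + 1) ≤ (q ^ 2 + 1) * (q ^ 3 + 1) := by nlinarith
          zify [h3]; ring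
        have := hsplit
        rw [hLdsum, hsum] at this
        omega
      by_contra hcon
      push_neg at hcon
      obtain ⟨ℓ0, hℓ0, hne⟩ := hcon
      have h1 : ∀ ℓ ∈ (Finset.univ.filter fun ℓ => ℓ ∈ Ld)ᶜ, 1 ≤ c ℓ := by
        intro ℓ _
        obtain ⟨p, hp, hip⟩ := hmeet ℓ
        exact Finset.card_pos.mpr ⟨p, by simp [hc, hp, hip]⟩
      have hlt : ∑ _ℓ ∈ (Finset.univ.filter fun ℓ => ℓ ∈ Ld)ᶜ, 1
          < ∑ ℓ ∈ (Finset.univ.filter fun ℓ => ℓ ∈ Ld)ᶜ, c ℓ :=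
        Finset.sum_lt_sum h1 ⟨ℓ0, hℓ0, lt_of_le_of_ne (h1 ℓ0 hℓ0) (Ne.symm hne)⟩
      rw [hSsum] at hlt
      simp at hlt
    intro ℓ hℓ
    have : ℓ ∈ (Finset.univ.filter fun ℓ => ℓ ∈ Ld)ᶜ := by simp [hℓ]
    have h2 : (Finset.univ.filter fun p => p ∈ Pd ∧ G.inc p ℓ).card = 1 := hone ℓ this
    rw [ncard_filter_univ] at h2
    exact h2
  -- auxiliary facts
  have hnotLd : ∀ p : P, p ∉ Pd → ∀ ℓ : L, G.inc p ℓ → ℓ ∉ Ld :=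
    fun p hp ℓ h hin => hp (hsub ℓ hin p h)
  have keyx : ∀ ℓ : L, ℓ ∉ Ld → ∃ x, x ∈ Pd ∧ G.inc x ℓ ∧
      ∀ p, p ∈ Pd → G.inc p ℓ → p = x := by
    intro ℓ hℓ
    obtain ⟨x, hx⟩ := Set.ncard_eq_one.mp (key ℓ hℓ)
    have hxm : x ∈ Pd ∧ G.inc x ℓ := by
      have : x ∈ {p : P | p ∈ Pd ∧ G.inc p ℓ} := hx ▸ rfl
      exact this
    exact ⟨x, hxm.1, hxm.2, fun p hp hip => by
      have : p ∈ ({x} : Set P) := hx ▸ (⟨hp, hip⟩ : p ∈ {p : P | p ∈ Pd ∧ G.inc p ℓ})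
      exact this⟩
  have hqm1 : ∀ (ℓ : L) (z : P), ℓ ∉ Ld → z ∉ Pd → G.inc z ℓ →
      {p : P | G.inc p ℓ ∧ p ∉ Pd ∧ p ≠ z}.ncard = q - 1 := by
    intro ℓ z hℓ hz hzℓ
    obtain ⟨x, hxPd, hxℓ, hxu⟩ := keyx ℓ hℓ
    have hxz : x ≠ z := fun h => hz (h ▸ hxPd)
    have hset : {p : P | G.inc p ℓ ∧ p ∉ Pd ∧ p ≠ z} = {p : P | G.inc p ℓ} \ {x, z} := by
      ext p
      simp only [Set.mem_setOf_eq, Set.mem_diff, Set.mem_insert_iff, Set.mem_singleton_iff]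
      constructor
      · rintro ⟨h1, h2, h3⟩
        refine ⟨h1, ?_⟩
        rintro (rfl | rfl)
        · exact h2 hxPd
        · exact h3 rfl
      · rintro ⟨h1, h2⟩
        push_neg at h2
        exact ⟨h1, fun hPd => h2.1 (hxu p hPd h1), h2.2⟩
    have hss : ({x, z} : Set P) ⊆ {p : P | G.inc p ℓ} := by
      rintro p (rfl | rfl)
      · exact hxℓ
      · exact hzℓ
    rw [hset, Set.ncard_diff hss (Set.toFinite _), Set.ncard_pair hxz, G.line_pts ℓ]
    omega
  have hl2 : ∀ (z : P) (ℓ : L), G.inc z ℓ → {m : L | G.inc z m ∧ m ≠ ℓ}.ncard = q ^ 2 := by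
    intro z ℓ h
    have hset : {m : L | G.inc z m ∧ m ≠ ℓ} = {m : L | G.inc z m} \ {ℓ} := by
      ext m; simp [Set.mem_diff]
    have hss : ({ℓ} : Set L) ⊆ {m : L | G.inc z m} := by simpa using h
    rw [hset, Set.ncard_diff hss (Set.toFinite _), Set.ncard_singleton, G.pt_lines z]
    omega
  have hcompl : Pd.ncard + Pdᶜ.ncard = Nat.card P := Set.ncard_add_ncard_compl Pd
  have hX : Pdᶜ.ncard + q ^ 2 = q ^ 4 := by
    have h2 : (q + 1) * (q ^ 3 + 1) = q ^ 4 + q ^ 3 + q + 1 := by ring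
    rw [hP, h2, hPd] at hcompl
    set a2 := q ^ 2; set a3 := q ^ 3; set a4 := q ^ 4
    omega
  have hq42 : q ^ 2 + 1 ≤ q ^ 4 := by nlinarith
  have hp0 : ∃ p₀ : P, p₀ ∉ Pd := by
    have hne : Pdᶜ.ncard ≠ 0 := by omega
    obtain ⟨p₀, h⟩ := Set.nonempty_of_ncard_ne_zero hne
    exact ⟨p₀, h⟩
  -- existence of a quadrilateral avoiding Pd
  have quadcore : ∃ a b c d : P, a ∉ Pd ∧ b ∉ Pd ∧ c ∉ Pd ∧ d ∉ Pd ∧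
      a ≠ b ∧ (¬ ∃ n : L, G.inc a n ∧ G.inc b n) ∧ c ≠ d ∧ c ≠ a ∧ c ≠ b ∧ d ≠ a ∧ d ≠ b ∧
      (∃ m : L, G.inc a m ∧ G.inc c m) ∧ (∃ m : L, G.inc c m ∧ G.inc b m) ∧
      (∃ m : L, G.inc b m ∧ G.inc d m) ∧ (∃ m : L, G.inc d m ∧ G.inc a m) := by
    obtain ⟨p₀, hp₀⟩ := hp0
    by_contra hno
    set s₁ : Finset L := Finset.univ.filter (fun ℓ => G.inc p₀ ℓ) with hs₁
    set f₁ : L → Finset P :=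
      fun ℓ => Finset.univ.filter (fun a => G.inc a ℓ ∧ a ∉ Pd ∧ a ≠ p₀) with hf₁
    set f₂ : L → P → Finset L :=
      fun ℓ a => Finset.univ.filter (fun m => G.inc a m ∧ m ≠ ℓ) with hf₂
    set f₃ : P → L → Finset P :=
      fun a m => Finset.univ.filter (fun x => G.inc x m ∧ x ∉ Pd ∧ x ≠ a) with hf₃
    set T : Finset (Σ _ : L, Σ _ : P, Σ _ : L, P) :=
      s₁.sigma (fun ℓ => (f₁ ℓ).sigma (fun a => (f₂ ℓ a).sigma (fun m => f₃ a m))) with hT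
    have hmemT : ∀ t : (Σ _ : L, Σ _ : P, Σ _ : L, P), t ∈ T ↔
        (G.inc p₀ t.1 ∧ (G.inc t.2.1 t.1 ∧ t.2.1 ∉ Pd ∧ t.2.1 ≠ p₀) ∧
         (G.inc t.2.1 t.2.2.1 ∧ t.2.2.1 ≠ t.1) ∧
         (G.inc t.2.2.2 t.2.2.1 ∧ t.2.2.2 ∉ Pd ∧ t.2.2.2 ≠ t.2.1)) := by
      rintro ⟨ℓ, a, m, x⟩
      simp [hT, hs₁, hf₁, hf₂, hf₃, Finset.mem_sigma, Finset.mem_filter, and_assoc]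
    -- cardinality of T
    have hs₁c : s₁.card = q ^ 2 + 1 := by
      rw [hs₁, ncard_filter_univ]; exact G.pt_lines p₀
    have hf₁c : ∀ ℓ ∈ s₁, (f₁ ℓ).card = q - 1 := by
      intro ℓ hℓ
      have hinc : G.inc p₀ ℓ := by simpa [hs₁] using hℓ
      show (Finset.univ.filter (fun a => G.inc a ℓ ∧ a ∉ Pd ∧ a ≠ p₀)).card = q - 1
      rw [ncard_filter_univ]
      exact hqm1 ℓ p₀ (hnotLd p₀ hp₀ ℓ hinc) hp₀ hinc
    have hf₂c : ∀ (ℓ : L) (a : P), G.inc a ℓ → (f₂ ℓ a).card = q ^ 2 := by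
      intro ℓ a h
      show (Finset.univ.filter (fun m => G.inc a m ∧ m ≠ ℓ)).card = q ^ 2
      rw [ncard_filter_univ]; exact hl2 a ℓ h
    have hf₃c : ∀ (a : P) (m : L), a ∉ Pd → G.inc a m → (f₃ a m).card = q - 1 := by
      intro a m ha h
      show (Finset.univ.filter (fun x => G.inc x m ∧ x ∉ Pd ∧ x ≠ a)).card = q - 1
      rw [ncard_filter_univ]
      exact hqm1 m a (hnotLd a ha m h) ha h
    have hTc : T.card = (q ^ 2 + 1) * ((q - 1) * (q ^ 2 * (q - 1))) := by
      rw [hT, Finset.card_sigma]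
      rw [Finset.sum_const_nat (m := (q - 1) * (q ^ 2 * (q - 1))) ?_, hs₁c]
      intro ℓ hℓ
      have hinc : G.inc p₀ ℓ := by simpa [hs₁] using hℓ
      rw [Finset.card_sigma]
      rw [Finset.sum_const_nat (m := q ^ 2 * (q - 1)) ?_, hf₁c ℓ hℓ]
      intro a ha
      have ha' : G.inc a ℓ ∧ a ∉ Pd ∧ a ≠ p₀ := by simpa [hf₁] using ha
      rw [Finset.card_sigma]
      rw [Finset.sum_const_nat (m := q - 1) ?_, hf₂c ℓ a ha'.1]
      intro m hm
      have hm' : G.inc a m ∧ m ≠ ℓ := by simpa [hf₂] using hm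
      exact hf₃c a m ha'.2.1 hm'.1
    -- the target of the projection
    set U : Finset P := Finset.univ.filter (fun x => x ∉ Pd ∧ x ≠ p₀) with hU
    have hUc : U.card = Pdᶜ.ncard - 1 := by
      rw [hU, ncard_filter_univ]
      have hset : {x : P | x ∉ Pd ∧ x ≠ p₀} = Pdᶜ \ {p₀} := by
        ext x; simp [Set.mem_diff]
      rw [hset, Set.ncard_diff (by simpa using hp₀) (Set.toFinite _), Set.ncard_singleton]
    -- projection to last coordinate is injective
    have hmaps : ∀ t ∈ T, t.2.2.2 ∈ U := by
      rintro ⟨ℓ, a, m, x⟩ ht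
      obtain ⟨hℓ, ⟨haℓ, haPd, hap⟩, ⟨ham, hmℓ⟩, hxm, hxPd, hxa⟩ := (hmemT _).mp ht
      simp only [hU, Finset.mem_filter, Finset.mem_univ, true_and]
      refine ⟨hxPd, fun hxp => ?_⟩
      subst hxp
      exact hmℓ (G.unique_line hap ham hxm haℓ hℓ)
    have hinj : Set.InjOn (fun t : (Σ _ : L, Σ _ : P, Σ _ : L, P) => t.2.2.2) ↑T := by
      rintro ⟨ℓ, a, m, x⟩ ht1 ⟨ℓ', a', m', x'⟩ ht2 heq
      simp only at heq
      subst heq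
      obtain ⟨hℓ, ⟨haℓ, haPd, hap⟩, ⟨ham, hmℓ⟩, hxm, hxPd, hxa⟩ :=
        (hmemT _).mp (Finset.mem_coe.mp ht1)
      obtain ⟨hℓ', ⟨haℓ', haPd', hap'⟩, ⟨ham', hmℓ'⟩, hxm', hxPd', hxa'⟩ :=
        (hmemT _).mp (Finset.mem_coe.mp ht2)
      have hxp₀ : x ≠ p₀ := fun hxp => hmℓ (by subst hxp; exact G.unique_line hap ham hxm haℓ hℓ)
      by_cases haa : a = a'
      · subst haa
        have hℓℓ : ℓ = ℓ' := G.unique_line hap haℓ hℓ haℓ' hℓ'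
        subst hℓℓ
        have hmm : m = m' := G.unique_line hxa hxm ham hxm' ham'
        subst hmm
        rfl
      · exfalso
        -- a and a' are non-collinear, with common neighbours p₀ and x: quadrilateral
        have hnocol : ¬ ∃ n : L, G.inc a n ∧ G.inc a' n := by
          rintro ⟨n, han, ha'n⟩
          by_cases hp₀n : G.inc p₀ n
          · have h1 : n = ℓ := G.unique_line hap han hp₀n haℓ hℓ
            have h2 : n = ℓ' := G.unique_line hap' ha'n hp₀n haℓ' hℓ'
            subst h1
            have hxn : ¬ G.inc x n := by
              intro hxn
              exact hmℓ (G.unique_line hxa hxm ham hxn han)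
            exact G.no_triangle haa han (h2 ▸ ha'n) hxn ⟨m, hxm, ham⟩ ⟨m', hxm', ham'⟩
          · exact G.no_triangle haa han ha'n hp₀n ⟨ℓ, hℓ, haℓ⟩ ⟨ℓ', hℓ', haℓ'⟩
        exact hno ⟨a, a', x, p₀, haPd, haPd', hxPd, hp₀, haa, hnocol,
          hxp₀, hxa, hxa', Ne.symm hap, Ne.symm hap',
          ⟨m, ham, hxm⟩, ⟨m', hxm', ham'⟩, ⟨ℓ', haℓ', hℓ'⟩, ⟨ℓ, hℓ, haℓ⟩⟩
    have hcard := Finset.card_le_card_of_injOn _ hmaps hinj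
    rw [hTc, hUc] at hcard
    -- numeric contradiction
    have h1X : 1 ≤ Pdᶜ.ncard := by
      rcases Nat.eq_zero_or_pos Pdᶜ.ncard with h | h
      · rw [h, zero_add] at hX
        nlinarith
      · exact h
    have hfin : (q ^ 2 + 1) * ((q - 1) * (q ^ 2 * (q - 1))) + 1 ≤ Pdᶜ.ncard :=
      Nat.add_le_of_le_sub h1X hcard
    have hfin2 : (q ^ 2 + 1) * ((q - 1) * (q ^ 2 * (q - 1))) + 1 + q ^ 2 ≤ q ^ 4 := by
      linarith [hX, hfin]
    obtain ⟨r, rfl⟩ : ∃ r, q = r + 2 := ⟨q - 2, by omega⟩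
    have hsimp : (r + 2) - 1 = r + 1 := by omega
    rw [hsimp] at hfin2
    set A := (r + 2) ^ 2 with hA
    have h4 : (r + 2) ^ 4 = A * A := by rw [hA]; ring
    rw [h4] at hfin2
    have hstep : A * A + A ≤ (A + 1) * ((r + 1) * (A * (r + 1))) := by
      have h5 : (A + 1) * ((r + 1) * (A * (r + 1))) = (A * A + A) * ((r + 1) * (r + 1)) := by
        ring
      rw [h5]
      have h6 : 0 < (r + 1) * (r + 1) := by positivity
      exact Nat.le_mul_of_pos_right _ h6
    linarith [hfin2, hstep]
  obtain ⟨a, b, c, d, haPd, hbPd, hcPd, hdPd, hab, hnab, hcd, hca, hcb, hda, hdb,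
    ⟨m₁, ham₁, hcm₁⟩, ⟨m₂, hcm₂, hbm₂⟩, ⟨m₃, hbm₃, hdm₃⟩, ⟨m₄, hdm₄, ham₄⟩⟩ := quadcore
  have h12 : m₁ ≠ m₂ := fun h => hnab ⟨m₂, h ▸ ham₁, hbm₂⟩
  have h13 : m₁ ≠ m₃ := fun h => hnab ⟨m₃, h ▸ ham₁, hbm₃⟩
  have h24 : m₂ ≠ m₄ := fun h => hnab ⟨m₂, h ▸ ham₄, hbm₂⟩
  have h34 : m₃ ≠ m₄ := fun h => hnab ⟨m₃, h ▸ ham₄, hbm₃⟩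
  have h14 : m₁ ≠ m₄ := by
    intro h
    rw [← h] at hdm₄
    have hbn : ¬ G.inc b m₁ := fun hb => hnab ⟨m₁, ham₁, hb⟩
    exact G.no_triangle hcd hcm₁ hdm₄ hbn ⟨m₂, hbm₂, hcm₂⟩ ⟨m₃, hbm₃, hdm₃⟩
  have h23 : m₂ ≠ m₃ := by
    intro h
    rw [← h] at hdm₃
    have han : ¬ G.inc a m₂ := fun ha => hnab ⟨m₂, ha, hbm₂⟩
    exact G.no_triangle hcd hcm₂ hdm₃ han ⟨m₁, ham₁, hcm₁⟩ ⟨m₄, ham₄, hdm₄⟩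
  have hm₁Ld : m₁ ∉ Ld := hnotLd a haPd m₁ ham₁
  have hm₂Ld : m₂ ∉ Ld := hnotLd c hcPd m₂ hcm₂
  have hm₃Ld : m₃ ∉ Ld := hnotLd b hbPd m₃ hbm₃
  have hm₄Ld : m₄ ∉ Ld := hnotLd d hdPd m₄ hdm₄
  refine ⟨key, ?_⟩
  intro Γ
  have H4 : ∀ ⦃p p' : {p : P // p ∉ Pd}⦄ ⦃l l' : {ℓ : L // ℓ ∉ Ld}⦄, p ≠ p' →
      G.inc p.1 l.1 → G.inc p'.1 l.1 → G.inc p.1 l'.1 → G.inc p'.1 l'.1 → l = l' := by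
    intro p p' l l' hne h1 h2 h3 h4
    exact Subtype.ext (G.unique_line (fun h => hne (Subtype.ext h)) h1 h2 h3 h4)
  have H6 : ∀ (p₁ p₂ p₃ : {p : P // p ∉ Pd}) (n₁ n₂ n₃ : {ℓ : L // ℓ ∉ Ld}),
      G.inc p₁.1 n₁.1 → G.inc p₂.1 n₁.1 → G.inc p₂.1 n₂.1 → G.inc p₃.1 n₂.1 →
      G.inc p₃.1 n₃.1 → G.inc p₁.1 n₃.1 → p₁ ≠ p₂ → p₂ ≠ p₃ → p₁ ≠ p₃ →
      n₁ ≠ n₂ → n₂ ≠ n₃ → n₁ ≠ n₃ → False := by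
    intro p₁ p₂ p₃ n₁ n₂ n₃ i1 i2 i3 i4 i5 i6 hp12 hp23 hp13 hn12 hn23 hn13
    have hv12 : p₁.1 ≠ p₂.1 := fun h => hp12 (Subtype.ext h)
    have hv23 : p₂.1 ≠ p₃.1 := fun h => hp23 (Subtype.ext h)
    have hn : ¬ G.inc p₁.1 n₂.1 := fun h =>
      hn12 (Subtype.ext (G.unique_line hv12 i1 i2 h i3))
    obtain ⟨u, -, hu⟩ := G.gq p₁.1 n₂.1 hn
    have e2 : p₂.1 = u := hu p₂.1 ⟨i3, fun h => hv12 h.symm, ⟨n₁.1, i1, i2⟩⟩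
    have e3 : p₃.1 = u := hu p₃.1 ⟨i4, fun h => hp13 (Subtype.ext h.symm), ⟨n₃.1, i6, i5⟩⟩
    exact hv23 (e2.trans e3.symm)
  obtain ⟨w, hwc, hwl⟩ := incGraph_cycle8
    (I := fun (p : {p : P // p ∉ Pd}) (ℓ : {ℓ : L // ℓ ∉ Ld}) => G.inc p.1 ℓ.1)
    (a := ⟨a, haPd⟩) (b := ⟨b, hbPd⟩) (c := ⟨c, hcPd⟩) (d := ⟨d, hdPd⟩)
    (m₁ := ⟨m₁, hm₁Ld⟩) (m₂ := ⟨m₂, hm₂Ld⟩) (m₃ := ⟨m₃, hm₃Ld⟩) (m₄ := ⟨m₄, hm₄Ld⟩)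
    ham₁ hcm₁ hcm₂ hbm₂ hbm₃ hdm₃ hdm₄ ham₄
    (fun h => hab (congrArg Subtype.val h)) (fun h => hca (congrArg Subtype.val h).symm)
    (fun h => hda (congrArg Subtype.val h).symm) (fun h => hcb (congrArg Subtype.val h).symm)
    (fun h => hdb (congrArg Subtype.val h).symm) (fun h => hcd (congrArg Subtype.val h))
    (fun h => h12 (congrArg Subtype.val h)) (fun h => h13 (congrArg Subtype.val h))
    (fun h => h14 (congrArg Subtype.val h)) (fun h => h23 (congrArg Subtype.val h))
    (fun h => h24 (congrArg Subtype.val h)) (fun h => h34 (congrArg Subtype.val h))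
  have hgirth : Γ.girth = 8 := by
    have hub : Γ.egirth ≤ ((8 : ℕ) : ℕ∞) := by
      have h1 : Γ.egirth ≤ (w.length : ℕ∞) := by
        unfold SimpleGraph.egirth
        exact iInf_le_of_le _ (iInf_le_of_le w (iInf_le_of_le hwc le_rfl))
      rw [hwl] at h1
      exact h1
    have hlb : ((8 : ℕ) : ℕ∞) ≤ Γ.egirth := by
      rw [SimpleGraph.le_egirth]
      intro v w' hw'
      have h3 := hw'.three_le_length
      have hev : Even w'.length := (incGraph_walk_even w').mpr rfl
      have h4 := incGraph_no_four H4 w' hw'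
      have h6 := incGraph_no_six H6 w' hw'
      obtain ⟨k, hk⟩ := hev
      have h8 : 8 ≤ w'.length := by omega
      exact_mod_cast h8
    have heg : Γ.egirth = ((8 : ℕ) : ℕ∞) := le_antisymm hub hlb
    show Γ.egirth.toNat = 8
    rw [heg]
    rfl
  refine ⟨hgirth, ?_, ?_, ?_⟩
  · -- point degrees
    intro p
    have hset : Γ.neighborSet (Sum.inl p) =
        Sum.inr '' {ℓ : {ℓ : L // ℓ ∉ Ld} | G.inc p.1 ℓ.1} := by
      ext x
      cases x with
      | inl p' =>
        simp only [SimpleGraph.mem_neighborSet, Set.mem_image]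
        constructor
        · intro h; exact absurd h (by exact fun h => incGraph_adj_ll.mp h)
        · rintro ⟨ℓ, -, h⟩; exact absurd h (by simp)
      | inr ℓ =>
        simp only [SimpleGraph.mem_neighborSet, Set.mem_image]
        constructor
        · intro h; exact ⟨ℓ, incGraph_adj_lr.mp h, rfl⟩
        · rintro ⟨ℓ', h, he⟩
          cases Sum.inr_injective he
          exact incGraph_adj_lr.mpr h
    rw [hset, Set.ncard_image_of_injective _ Sum.inr_injective]
    rw [← Set.ncard_image_of_injective _ Subtype.val_injective]
    have himg : Subtype.val '' {ℓ : {ℓ : L // ℓ ∉ Ld} | G.inc p.1 ℓ.1}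
        = {ℓ : L | G.inc p.1 ℓ} := by
      ext ℓ
      simp only [Set.mem_image, Set.mem_setOf_eq]
      constructor
      · rintro ⟨⟨m, hm⟩, h1, rfl⟩; exact h1
      · intro h; exact ⟨⟨ℓ, hnotLd p.1 p.2 ℓ h⟩, h, rfl⟩
    rw [himg]
    exact G.pt_lines p.1
  · -- line degrees
    intro ℓ
    have hset : Γ.neighborSet (Sum.inr ℓ) =
        Sum.inl '' {p : {p : P // p ∉ Pd} | G.inc p.1 ℓ.1} := by
      ext x
      cases x with
      | inr ℓ' =>
        simp only [SimpleGraph.mem_neighborSet, Set.mem_image]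
        constructor
        · intro h; exact absurd h (by exact fun h => incGraph_adj_rr.mp h)
        · rintro ⟨p, -, h⟩; exact absurd h (by simp)
      | inl p =>
        simp only [SimpleGraph.mem_neighborSet, Set.mem_image]
        constructor
        · intro h; exact ⟨p, incGraph_adj_rl.mp h, rfl⟩
        · rintro ⟨p', h, he⟩
          cases Sum.inl_injective he
          exact incGraph_adj_rl.mpr h
    rw [hset, Set.ncard_image_of_injective _ Sum.inl_injective]
    rw [← Set.ncard_image_of_injective _ Subtype.val_injective]
    obtain ⟨x, hxPd, hxℓ, hxu⟩ := keyx ℓ.1 ℓ.2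
    have himg : Subtype.val '' {p : {p : P // p ∉ Pd} | G.inc p.1 ℓ.1}
        = {p : P | G.inc p ℓ.1} \ {x} := by
      ext p
      simp only [Set.mem_image, Set.mem_setOf_eq, Set.mem_diff, Set.mem_singleton_iff]
      constructor
      · rintro ⟨⟨p', hp'⟩, h1, rfl⟩
        exact ⟨h1, fun h => hp' (show p' ∈ Pd by rw [show p' = x from h]; exact hxPd)⟩
      · rintro ⟨h1, h2⟩
        have hpPd : p ∉ Pd := fun hp => h2 (hxu p hp h1)
        exact ⟨⟨p, hpPd⟩, h1, rfl⟩
    rw [himg, Set.ncard_diff (by simpa using hxℓ) (Set.toFinite _), Set.ncard_singleton,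
      G.line_pts ℓ.1]
    omega
  · -- order
    rw [Nat.card_sum]
    have h1 : Nat.card {p : P // p ∉ Pd} = Pdᶜ.ncard := by
      rw [← Nat.card_coe_set_eq]
      exact Nat.card_congr (Equiv.subtypeEquivRight (by simp))
    have h2 : Nat.card {ℓ : L // ℓ ∉ Ld} = Ldᶜ.ncard := by
      rw [← Nat.card_coe_set_eq]
      exact Nat.card_congr (Equiv.subtypeEquivRight (by simp))
    rw [h1, h2]
    have hcomplL : Ld.ncard + Ldᶜ.ncard = Nat.card L := Set.ncard_add_ncard_compl Ld
    rw [hLd, hL] at hcomplL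
    have hsub3 : q ≤ q ^ 3 := by nlinarith
    have hq24 : q ^ 2 ≤ q ^ 4 := by nlinarith
    zify [hsub3, hq24] at hX hcomplL ⊢
    linarith [hX, hcomplL]
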